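/- Let E be a finite-dimensional complex normed space, let f : E → E be analytic at 0 with f 0 = 0, let A := fderiv ℂ f 0, and suppose A^q = id for some integer q ≥ 1 (equivalently, A is diagonalizable with all eigenvalues roots of unity of order dividing q). Then f is holomorphically linearizable (there exists h analytic at 0 with h 0 = 0, fderiv ℂ h 0 = id, and h ∘ f = A ∘ h near 0) if and only if the q-th iterate f^[q] coincides with the identity map on a neighborhood of 0. -/

import Mathlib

open Filter Topology

/-- If the linear part `A` of `f` satisfies `A^q = id`, then `f` is holomorphically
linearizable if and only if `f^[q]` is the identity near `0`. -/
theorem linearizable_iff_iterate_eq_id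
    {E : Type*} [NormedAddCommGroup E] [NormedSpace ℂ E] [FiniteDimensional ℂ E]
    (q : ℕ) (hq : 1 ≤ q)
    (f : E → E) (hf : AnalyticAt ℂ f 0) (hf0 : f 0 = 0)
    (A : E →L[ℂ] E) (hA : A = fderiv ℂ f 0)
    (hAq : A ^ q = ContinuousLinearMap.id ℂ E) :
    (∃ h : E → E, AnalyticAt ℂ h 0 ∧ h 0 = 0 ∧
        fderiv ℂ h 0 = ContinuousLinearMap.id ℂ E ∧
        h ∘ f =ᶠ[𝓝 0] (A : E → E) ∘ h) ↔
      f^[q] =ᶠ[𝓝 0] id := by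
  have hqC : (q : ℂ) ≠ 0 := Nat.cast_ne_zero.mpr (by omega)
  have hiter0 : ∀ n, f^[n] 0 = 0 := fun n => Function.iterate_fixed hf0 n
  have hiterA : ∀ n, AnalyticAt ℂ (f^[n]) (0 : E) := by
    intro n; induction n with
    | zero => exact analyticAt_id
    | succ n ih =>
      rw [Function.iterate_succ']
      exact AnalyticAt.comp (by rw [hiter0 n]; exact hf) ih
  have htend : ∀ n, Tendsto (f^[n]) (𝓝 (0 : E)) (𝓝 0) := fun n => by
    have := (hiterA n).continuousAt.tendsto
    rwa [hiter0 n] at this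
  have hderiv : ∀ n, fderiv ℂ (f^[n]) 0 = A ^ n := by
    intro n; induction n with
    | zero => simp [ContinuousLinearMap.one_def]
    | succ n ih =>
      rw [Function.iterate_succ',
        fderiv_comp 0 (by rw [hiter0 n]; exact hf.differentiableAt)
          (hiterA n).differentiableAt,
        hiter0 n, ← hA, ih, pow_succ', ContinuousLinearMap.mul_def]
  constructor
  · rintro ⟨h, hh, hh0, hdh, heq⟩
    have key : ∀ n, h ∘ f^[n] =ᶠ[𝓝 0] ((A ^ n : E →L[ℂ] E) : E → E) ∘ h := by
      intro n; induction n with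
      | zero =>
        apply Filter.EventuallyEq.of_eq
        funext x; simp
      | succ n ih =>
        have e1 : h ∘ f^[n + 1] = (h ∘ f) ∘ f^[n] := by
          rw [Function.iterate_succ']
          rfl
        rw [e1]
        calc (h ∘ f) ∘ f^[n] =ᶠ[𝓝 0] ((A : E → E) ∘ h) ∘ f^[n] :=
              heq.comp_tendsto (htend n)
          _ = (A : E → E) ∘ (h ∘ f^[n]) := rfl
          _ =ᶠ[𝓝 0] (A : E → E) ∘ (((A ^ n : E →L[ℂ] E) : E → E) ∘ h) := ih.fun_comp A
          _ = ((A ^ (n + 1) : E →L[ℂ] E) : E → E) ∘ h := by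
              funext x; simp [pow_succ', ContinuousLinearMap.mul_apply]
    have keyq : h ∘ f^[q] =ᶠ[𝓝 0] h := by
      have := key q
      rw [hAq] at this
      simpa using this
    have hsd : HasStrictFDerivAt h ((ContinuousLinearEquiv.refl ℂ E : E ≃L[ℂ] E) :
        E →L[ℂ] E) 0 := by
      have h1 := hh.hasStrictFDerivAt
      rw [hdh] at h1
      exact h1
    set φ := hsd.toOpenPartialHomeomorph h with hφ
    have hφ0 : (0 : E) ∈ φ.source := hsd.mem_toOpenPartialHomeomorph_source
    have hinj : Set.InjOn h φ.source := by
      have := φ.injOn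
      rwa [hφ, hsd.toOpenPartialHomeomorph_coe] at this
    have hUs : φ.source ∈ 𝓝 (0 : E) := φ.open_source.mem_nhds hφ0
    have hmem : ∀ᶠ x in 𝓝 (0 : E), f^[q] x ∈ φ.source := (htend q) hUs
    filter_upwards [keyq, hmem, hUs] with x hx hx1 hx2
    exact hinj hx1 hx2 hx
  · intro hfq
    set g : ℕ → E → E := fun j x => (A ^ ((q - 1) * j)) (f^[j] x) with hg
    have hgA : ∀ j, AnalyticAt ℂ (g j) 0 := fun j =>
      ((A ^ ((q - 1) * j)).analyticAt _).comp (hiterA j)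
    have hsumA : AnalyticAt ℂ (fun x => ∑ j ∈ Finset.range q, g j x) 0 :=
      Finset.analyticAt_fun_sum _ (fun j _ => hgA j)
    refine ⟨fun x => (q : ℂ)⁻¹ • ∑ j ∈ Finset.range q, g j x, ?_, ?_, ?_, ?_⟩
    · exact analyticAt_const.smul hsumA
    · simp [hg, hiter0]
    · rw [fderiv_fun_const_smul hsumA.differentiableAt,
        fderiv_fun_sum (fun j _ => (hgA j).differentiableAt)]
      have hterm : ∀ j ∈ Finset.range q, fderiv ℂ (g j) 0 = ContinuousLinearMap.id ℂ E := by
        intro j _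
        have e1 : g j = ⇑(A ^ ((q - 1) * j)) ∘ f^[j] := rfl
        rw [e1, fderiv_comp 0 ((A ^ ((q - 1) * j)).differentiableAt)
          (hiterA j).differentiableAt, (A ^ ((q - 1) * j)).fderiv, hderiv j,
          ← ContinuousLinearMap.mul_def, ← pow_add,
          show (q - 1) * j + j = q * j by rw [Nat.sub_one_mul, Nat.sub_add_cancel (Nat.le_mul_of_pos_left j (by omega))],
          pow_mul, hAq, ← ContinuousLinearMap.one_def, one_pow]
      rw [Finset.sum_congr rfl hterm, Finset.sum_const, Finset.card_range,
        ← Nat.cast_smul_eq_nsmul ℂ, smul_smul, inv_mul_cancel₀ hqC, one_smul]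
    · have hA1 : ∀ y : E, A ((A ^ (q - 1)) y) = y := by
        intro y
        have e : A * A ^ (q - 1) = 1 := by
          rw [← pow_succ']
          rw [show q - 1 + 1 = q from by omega, hAq, ContinuousLinearMap.one_def]
        calc A ((A ^ (q - 1)) y) = (A * A ^ (q - 1)) y := rfl
          _ = y := by rw [e]; simp
      filter_upwards [hfq] with x hx
      have hgq : g q x = g 0 x := by
        simp only [hg]
        rw [hx]
        simp only [Function.iterate_zero, id_eq, Nat.mul_zero, pow_zero]
        rw [show (q - 1) * q = q * (q - 1) from Nat.mul_comm _ _, pow_mul, hAq,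
          ← ContinuousLinearMap.one_def, one_pow]
      have hshift : ∑ j ∈ Finset.range q, g (j + 1) x = ∑ j ∈ Finset.range q, g j x := by
        have e1 := Finset.sum_range_succ' (fun j => g j x) q
        have e2 := Finset.sum_range_succ (fun j => g j x) q
        rw [e2] at e1
        have := e1.symm
        rw [hgq] at this
        exact add_right_cancel this
      have hstep : ∀ j, (A ^ (q - 1)) (g j (f x)) = g (j + 1) x := by
        intro j
        simp only [hg]
        rw [← Function.iterate_succ_apply]
        calc (A ^ (q - 1)) ((A ^ ((q - 1) * j)) (f^[j + 1] x))
            = (A ^ (q - 1) * A ^ ((q - 1) * j)) (f^[j + 1] x) := rfl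
          _ = (A ^ ((q - 1) * (j + 1))) (f^[j + 1] x) := by
              rw [← pow_add]
              congr 2
              ring
      have hmain : (A ^ (q - 1)) ((q : ℂ)⁻¹ • ∑ j ∈ Finset.range q, g j (f x)) =
          (q : ℂ)⁻¹ • ∑ j ∈ Finset.range q, g j x := by
        rw [map_smul, map_sum]
        congr 1
        rw [Finset.sum_congr rfl (fun j _ => hstep j)]
        exact hshift
      show (q : ℂ)⁻¹ • ∑ j ∈ Finset.range q, g j (f x) =
        A ((q : ℂ)⁻¹ • ∑ j ∈ Finset.range q, g j x)
      rw [← hmain, hA1]
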